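/- Define f_A(p,q) = dp + aαe^{-q} + bβe^{q} for A = aX+bY+cZ+dT with fixed α, β ∈ ℝ. Then {f_A, f_B} = f_{[A,B]} for all A, B in the real diamond Lie algebra, with the standard Poisson bracket on ℝ². -/

import Mathlib

/-- The standard Poisson bracket on ℝ²: {u,v} = ∂_p u · ∂_q v - ∂_q u · ∂_p v. -/
noncomputable def poisson (u v : ℝ × ℝ → ℝ) : ℝ × ℝ → ℝ :=
  fun w =>
    deriv (fun p => u (p, w.2)) w.1 * deriv (fun q => v (w.1, q)) w.2
      - deriv (fun q => u (w.1, q)) w.2 * deriv (fun p => v (p, w.2)) w.1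

/-- The Hamiltonian function of A = aX + bY + cZ + dT on the hyperbolic
cylinder orbit Ω⁴: f_A(p,q) = dp + aαe^{-q} + bβe^{q}. -/
noncomputable def fA4 (α β a b c d : ℝ) : ℝ × ℝ → ℝ :=
  fun w => d * w.1 + a * α * Real.exp (-w.2) + b * β * Real.exp w.2

lemma deriv_p (α β a b c d q : ℝ) (p : ℝ) :
    deriv (fun p => fA4 α β a b c d (p, q)) p = d := by
  have h : HasDerivAt (fun p : ℝ => fA4 α β a b c d (p, q)) d p := by
    unfold fA4
    have := (((hasDerivAt_id p).const_mul d).add (hasDerivAt_const p (a * α * Real.exp (-q)))).add (hasDerivAt_const p (b * β * Real.exp q))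
    simp only [mul_one, add_zero] at this
    exact this
  exact h.deriv

lemma deriv_q (α β a b c d p : ℝ) (q : ℝ) :
    deriv (fun q => fA4 α β a b c d (p, q)) q
      = -(a * α * Real.exp (-q)) + b * β * Real.exp q := by
  unfold fA4
  have h1 : HasDerivAt (fun q : ℝ => d * p + a * α * Real.exp (-q) + b * β * Real.exp q)
      (-(a * α * Real.exp (-q)) + b * β * Real.exp q) q := by
    have e1 : HasDerivAt (fun q : ℝ => Real.exp (-q)) (-Real.exp (-q)) q := by
      have := (Real.hasDerivAt_exp (-q)).comp q ((hasDerivAt_id q).neg)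
      simp only [mul_neg, mul_one] at this
      exact this
    have e2 := (Real.hasDerivAt_exp q)
    have := ((hasDerivAt_const q (d * p)).add ((e1.const_mul (a * α)))).add
      (e2.const_mul (b * β))
    convert this using 1
    · rfl
    · rfl
    · rfl
    ring
  exact h1.deriv

/-- {f_A, f_B} = f_{[A,B]} on the hyperbolic cylinder orbit Ω⁴, where
[A,B] = (ad'-da')X + (db'-d'b)Y + (ab'-a'b)Z. -/
theorem poisson_fA4 (α β : ℝ) (a b c d a' b' c' d' : ℝ) :
    poisson (fA4 α β a b c d) (fA4 α β a' b' c' d')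
      = fA4 α β (a * d' - d * a') (d * b' - d' * b) (a * b' - a' * b) 0 := by
  funext w
  rw [poisson, deriv_p, deriv_q, deriv_p, deriv_q]
  show _ = fA4 α β _ _ _ 0 w
  unfold fA4
  ring
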